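/- Suppose K is the cubic form on R^3_1 with LVB coefficients all zero except b_7 ≠ 0, so that K(X,X) = b_7 z² e for X = x e + y v + z f. Then any M ∈ SO(1,2) preserving K fixes the lightlike vector e: M(e) = e. -/
import Mathlib


open Matrix

/-- Inner product of `ℝ³₁` in a light-vector basis `{e,v,f}`. -/
def ipL (x y : Fin 3 → ℝ) : ℝ := x 0 * y 2 + x 2 * y 0 + x 1 * y 1

/-- The cubic form with `K(X,Y) = b₇ x_f y_f e` (only LVB coefficient `b₇`). -/
def Kb7 (b7 : ℝ) (X Y : Fin 3 → ℝ) : Fin 3 → ℝ := (b7 * X 2 * Y 2) • ![1, 0, 0]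

/-- If `K` is the cubic form on `ℝ³₁` whose only nonvanishing LVB coefficient
is `b₇ ≠ 0` (so `K(X,X) = b₇ z² e`), then any `M ∈ SO(1,2)` preserving `K`
fixes the lightlike basis vector `e`. -/
theorem stmt10 (b7 : ℝ) (hb7 : b7 ≠ 0) (M : Matrix (Fin 3) (Fin 3) ℝ)
    (hiso : ∀ x y : Fin 3 → ℝ, ipL (M.mulVec x) (M.mulVec y) = ipL x y)
    (hdet : M.det = 1)
    (hK : ∀ X Y Z : Fin 3 → ℝ,
      ipL (Kb7 b7 (M.mulVec X) (M.mulVec Y)) (M.mulVec Z) = ipL (Kb7 b7 X Y) Z) :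
    M.mulVec ![1, 0, 0] = ![1, 0, 0] := by
  have h1 := hK ![0,0,1] ![0,0,1] ![0,0,1]
  have h2 := hK ![0,0,1] ![0,0,1] ![1,0,0]
  have h3 := hK ![0,0,1] ![0,0,1] ![0,1,0]
  have h4 := hiso ![1,0,0] ![1,0,0]
  have h5 := hiso ![1,0,0] ![0,0,1]
  simp [Kb7, ipL, mulVec, dotProduct, Fin.sum_univ_three] at h1 h2 h3 h4 h5
  -- cube root: M 2 2 = 1
  have hc3 : M 2 2 * M 2 2 * M 2 2 = 1 := by
    have h : b7 * (M 2 2 * M 2 2 * M 2 2 - 1) = 0 := by ring_nf; ring_nf at h1; linarith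
    rcases mul_eq_zero.mp h with h | h
    · exact absurd h hb7
    · linarith
  have hc : M 2 2 = 1 := by nlinarith [hc3, sq_nonneg (2 * M 2 2 + 1), sq_nonneg (M 2 2 - 1)]
  have h20 : M 2 0 = 0 := by
    rcases h2 with (h | h) | h
    · exact absurd h hb7
    · rw [h] at hc; norm_num at hc
    · exact h
  have h10 : M 1 0 = 0 := by rw [h20] at h4; nlinarith [h4]
  have h00 : M 0 0 = 1 := by
    rw [h20, h10, hc] at h5; linarith [h5]
  funext i
  fin_cases i <;>
    simp [mulVec, dotProduct, Fin.sum_univ_three, h00, h10, h20]
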